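/- The function φ(z) = (−z)^{−1−α} · P_n(1/z; α, β) satisfies the generalized eigenvalue equation L₁ φ = (−n−1−α−β) L₂ φ, where L₁ = z(1−z)∂_z² + (1−β−(2+α)z)∂_z and L₂ = (1−z)∂_z − (α+1)I. -/

import Mathlib

open Finset

noncomputable def poch (a : ℝ) (k : ℕ) : ℝ := ∏ i ∈ Finset.range k, (a + i)

noncomputable def HR (n : ℕ) (α β : ℝ) (z : ℝ) : ℝ :=
  (poch β n / poch (α + 1) n) *
    ∑ k ∈ Finset.range (n + 1),
      (poch (-(n : ℝ)) k * poch (α + 1) k) / ((k.factorial : ℝ) * poch (1 - β - (n : ℝ)) k) * z ^ k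

lemma poch_succ (a : ℝ) (k : ℕ) : poch a (k+1) = poch a k * (a + k) := by
  simp [poch, Finset.prod_range_succ]

lemma poch_ne_zero (a : ℝ) (k : ℕ) (h : ∀ j < k, a + (j:ℝ) ≠ 0) : poch a k ≠ 0 := by
  rw [poch, Finset.prod_ne_zero_iff]
  intro i hi; exact h i (Finset.mem_range.mp hi)

lemma poch_neg_nat_eq_zero (n k : ℕ) (h : n < k) : poch (-(n:ℝ)) k = 0 :=
  Finset.prod_eq_zero (Finset.mem_range.mpr h) (by simp)

lemma hasDerivAt_negrpow (q t : ℝ) (ht : t < 0) :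
    HasDerivAt (fun s : ℝ => (-s) ^ q) (-(q * (-t) ^ (q - 1))) t := by
  have h1 : HasDerivAt (fun s : ℝ => -s) (-1) t := by
    exact hasDerivAt_neg t
  have h2 : HasDerivAt (fun x : ℝ => x ^ q) (q * (-t) ^ (q - 1)) (-t) :=
    Real.hasDerivAt_rpow_const (Or.inl (by linarith))
  have := h2.comp t h1
  simpa [mul_comm, Function.comp_def] using this

theorem hr_quasi_eigenfunction_type3 (n : ℕ) (α β : ℝ)
    (hβ : ∀ j < n, β + (j : ℝ) ≠ 0)
    (hα : ∀ j < n, α + 1 + (j : ℝ) ≠ 0)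
    (hd : ∀ j < n, 1 - β - (n : ℝ) + (j : ℝ) ≠ 0) :
    ∀ z : ℝ, z < 0 →
      z * (1 - z) * deriv (deriv (fun t => (-t) ^ (-1 - α) * HR n α β (1 / t))) z
        + (1 - β - (2 + α) * z) * deriv (fun t => (-t) ^ (-1 - α) * HR n α β (1 / t)) z
      = (-(n : ℝ) - 1 - α - β) *
          ((1 - z) * deriv (fun t => (-t) ^ (-1 - α) * HR n α β (1 / t)) z
            - (α + 1) * ((-z) ^ (-1 - α) * HR n α β (1 / z))) := by
  intro z hz
  set C : ℝ := poch β n / poch (α + 1) n with hC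
  set b : ℕ → ℝ := fun k =>
    (-1:ℝ)^k * (poch (-(n:ℝ)) k * poch (α + 1) k) / ((k.factorial : ℝ) * poch (1 - β - (n:ℝ)) k)
    with hb
  set a : ℕ → ℝ := fun k => C * b k with ha
  set p : ℕ → ℝ := fun k => -1 - α - (k:ℝ) with hp
  set F : ℝ → ℝ := fun t => ∑ k ∈ range (n+1), a k * (-t) ^ (p k) with hF
  set F1 : ℝ → ℝ := fun t => ∑ k ∈ range (n+1), (a k * -(p k)) * (-t) ^ (p k - 1) with hF1
  set F2 : ℝ → ℝ := fun t =>
    ∑ k ∈ range (n+1), (a k * -(p k) * -(p k - 1)) * (-t) ^ (p k - 1 - 1) with hF2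
  -- φ = F on negatives
  have hphiF : ∀ t : ℝ, t < 0 → (-t) ^ (-1 - α) * HR n α β (1 / t) = F t := by
    intro t ht
    have hwt : (0:ℝ) < -t := by linarith
    have hpow : ∀ k : ℕ, (-t) ^ (-1 - α) * (1/t) ^ k = (-1:ℝ)^k * (-t) ^ (p k) := by
      intro k
      have h1 : (1/t) ^ k = (-1:ℝ)^k * ((-t) ^ k)⁻¹ := by
        rw [one_div, ← inv_pow, ← mul_pow]
        congr 1
        rw [inv_neg]; ring
      have h2 : (-t) ^ (p k) = (-t) ^ (-1 - α) * ((-t) ^ k)⁻¹ := by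
        simp only [hp]
        rw [show -1 - α - (k:ℝ) = (-1 - α) + (-(k:ℝ)) by ring,
          Real.rpow_add hwt, Real.rpow_neg hwt.le, Real.rpow_natCast]
      rw [h1, h2]; ring
    rw [hF]
    simp only [HR, ← hC]
    rw [Finset.mul_sum, Finset.mul_sum]
    refine Finset.sum_congr rfl fun k _ => ?_
    simp only [ha, hb]
    linear_combination (C * (poch (-(n:ℝ)) k * poch (α+1) k /
      ((k.factorial:ℝ) * poch (1 - β - (n:ℝ)) k))) * hpow k
  -- derivatives of F
  have hFd : ∀ t : ℝ, t < 0 → HasDerivAt F (F1 t) t := by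
    intro t ht
    have h : HasDerivAt (fun s => ∑ k ∈ range (n+1), a k * (-s) ^ (p k))
        (∑ k ∈ range (n+1), a k * -(p k * (-t) ^ (p k - 1))) t :=
      HasDerivAt.fun_sum fun k _ => (hasDerivAt_negrpow (p k) t ht).const_mul (a k)
    rw [hF, hF1]
    convert h using 1
    exact Finset.sum_congr rfl fun k _ => by ring
  have hF1d : ∀ t : ℝ, t < 0 → HasDerivAt F1 (F2 t) t := by
    intro t ht
    have h : HasDerivAt (fun s => ∑ k ∈ range (n+1), (a k * -(p k)) * (-s) ^ (p k - 1))
        (∑ k ∈ range (n+1), (a k * -(p k)) * -((p k - 1) * (-t) ^ (p k - 1 - 1))) t :=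
      HasDerivAt.fun_sum fun k _ => (hasDerivAt_negrpow (p k - 1) t ht).const_mul (a k * -(p k))
    rw [hF1, hF2]
    convert h using 1
    exact Finset.sum_congr rfl fun k _ => by ring
  -- identify derivs of φ
  have hd1 : ∀ t : ℝ, t < 0 →
      deriv (fun t => (-t) ^ (-1 - α) * HR n α β (1 / t)) t = F1 t := by
    intro t ht
    have hEq : (fun t => (-t) ^ (-1 - α) * HR n α β (1 / t)) =ᶠ[nhds t] F :=
      Filter.eventuallyEq_of_mem (Iio_mem_nhds ht) fun s hs => hphiF s hs
    rw [hEq.deriv_eq, (hFd t ht).deriv]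
  have hd2 : deriv (deriv (fun t => (-t) ^ (-1 - α) * HR n α β (1 / t))) z = F2 z := by
    have hEq : deriv (fun t => (-t) ^ (-1 - α) * HR n α β (1 / t)) =ᶠ[nhds z] F1 :=
      Filter.eventuallyEq_of_mem (Iio_mem_nhds hz) fun s hs => hd1 s hs
    rw [hEq.deriv_eq, (hF1d z hz).deriv]
  rw [hd2, hd1 z hz, hphiF z hz]
  -- now pure algebra on sums
  have hw : (0:ℝ) < -z := by linarith
  set u : ℕ → ℝ := fun k => a k * (k:ℝ) * ((n:ℝ) + β - (k:ℝ)) * (-z) ^ (p k) with hu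
  -- recurrence
  have hrec : ∀ k : ℕ,
      a (k+1) * ((k:ℝ)+1) * ((n:ℝ) + β - ((k:ℝ)+1)) = -(a k * (1 + α + (k:ℝ)) * ((n:ℝ) - (k:ℝ))) := by
    intro k
    have brec : b (k+1) * ((k:ℝ)+1) * ((n:ℝ) + β - ((k:ℝ)+1))
        = -(b k * (1 + α + (k:ℝ)) * ((n:ℝ) - (k:ℝ))) := by
      rcases lt_or_ge k n with hk | hk
      · have hDk : poch (1 - β - (n:ℝ)) k ≠ 0 :=
          poch_ne_zero _ _ fun j hj => hd j (hj.trans hk)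
        have hDe : (1 - β - (n:ℝ) + (k:ℝ)) ≠ 0 := hd k hk
        have hf : ((k.factorial : ℝ)) ≠ 0 := Nat.cast_ne_zero.mpr k.factorial_ne_zero
        rw [hb]
        simp only [poch_succ, Nat.factorial_succ, Nat.cast_mul, Nat.cast_add, Nat.cast_one,
          pow_succ]
        field_simp
        ring
      · have h1 : poch (-(n:ℝ)) (k+1) = 0 := poch_neg_nat_eq_zero n (k+1) (by omega)
        have hL : b (k+1) = 0 := by rw [hb]; simp [h1]
        rw [hL]
        rcases eq_or_lt_of_le hk with h | h
        · rw [← h]; simp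
        · have h2 : poch (-(n:ℝ)) k = 0 := poch_neg_nat_eq_zero n k h
          have : b k = 0 := by rw [hb]; simp [h2]
          rw [this]; ring
    simp only [ha]
    calc C * b (k+1) * ((k:ℝ)+1) * ((n:ℝ) + β - ((k:ℝ)+1))
        = C * (b (k+1) * ((k:ℝ)+1) * ((n:ℝ) + β - ((k:ℝ)+1))) := by ring
      _ = C * -(b k * (1 + α + (k:ℝ)) * ((n:ℝ) - (k:ℝ))) := by rw [brec]
      _ = -(C * b k * (1 + α + (k:ℝ)) * ((n:ℝ) - (k:ℝ))) := by ring
  have hu0 : u 0 = 0 := by simp [hu]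
  have hun : u (n+1) = 0 := by
    have h1 : poch (-(n:ℝ)) (n+1) = 0 := poch_neg_nat_eq_zero n (n+1) (by omega)
    have : a (n+1) = 0 := by rw [ha, hb]; simp [h1]
    simp [hu, this]
  have expand : z * (1-z) * F2 z + (1 - β - (2+α)*z) * F1 z
      - (-(n:ℝ) - 1 - α - β) * ((1-z) * F1 z - (α+1) * F z)
      = ∑ k ∈ range (n+1), (u k - u (k+1)) := by
    rw [hF, hF1, hF2]
    simp only [mul_sub, Finset.mul_sum, ← Finset.sum_sub_distrib, ← Finset.sum_add_distrib]
    refine Finset.sum_congr rfl fun k _ => ?_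
    have e1 : (-z) ^ (p k - 1) = (-z) ^ (p k - 1 - 1) * (-z) := by
      rw [← Real.rpow_add_one (ne_of_gt hw) (p k - 1 - 1)]
      congr 1; ring
    have e2 : (-z) ^ (p k) = (-z) ^ (p k - 1 - 1) * (-z) * (-z) := by
      rw [← Real.rpow_add_one (ne_of_gt hw), ← Real.rpow_add_one (ne_of_gt hw)]
      congr 1; ring
    have e3 : p (k+1) = p k - 1 := by rw [hp]; push_cast; ring
    rw [hu]
    simp only []
    rw [e3, e1, e2]
    have hr := hrec k
    simp only [hp] at hr ⊢
    push_cast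
    linear_combination ((-z) ^ (-1 - α - (k:ℝ) - 1 - 1) * (-z)) * hr
  have final : ∑ k ∈ range (n+1), (u k - u (k+1)) = 0 := by
    rw [Finset.sum_range_sub' u (n+1), hu0, hun, sub_zero]
  linarith [expand, final]
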